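/- Let H be a subgroup of (ℤ/mℤ)^n. Then (H^⊥)^⊥ = H. -/
import Mathlib

noncomputable def psi4 (m : ℕ) [NeZero m] : ZMod m →+ AddCircle (1 : ℚ) :=
  ZMod.lift m ⟨zmultiplesHom _ (((m : ℚ)⁻¹ : ℚ) : AddCircle (1 : ℚ)), by
    simp only [zmultiplesHom_apply, natCast_zsmul, ← AddCircle.coe_nsmul, nsmul_eq_mul]
    rw [mul_inv_cancel₀ (by exact_mod_cast (NeZero.ne m))]
    exact AddCircle.coe_period 1⟩

lemma psi4_coe (m : ℕ) [NeZero m] (z : ℤ) :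
    psi4 m (z : ZMod m) = (((z : ℚ) * (m : ℚ)⁻¹ : ℚ) : AddCircle (1 : ℚ)) := by
  rw [psi4, ZMod.lift_coe]
  simp only [zmultiplesHom_apply, ← AddCircle.coe_zsmul, zsmul_eq_mul]

lemma psi4_inj (m : ℕ) [NeZero m] : Function.Injective (psi4 m) := by
  have horder : addOrderOf (((m : ℚ)⁻¹ : ℚ) : AddCircle (1 : ℚ)) = m := by
    have := AddCircle.addOrderOf_period_div (p := (1 : ℚ)) (n := m) (NeZero.pos m)
    simpa [one_div] using this
  intro a b hab
  have h : psi4 m (a - b) = 0 := by rw [map_sub, hab, sub_self]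
  set c := a - b with hc
  have hv : ((c.val : ℤ) : ZMod m) = c := by
    push_cast
    simp [ZMod.natCast_val, ZMod.cast_id]
  rw [← hv, psi4, ZMod.lift_coe] at h
  simp only [zmultiplesHom_apply, natCast_zsmul] at h
  have hdvd : m ∣ c.val := by
    have := addOrderOf_dvd_of_nsmul_eq_zero h
    rwa [horder] at this
  have hval : c.val = 0 := Nat.eq_zero_of_dvd_of_lt hdvd (ZMod.val_lt c)
  have hc0 : c = 0 := by rwa [ZMod.val_eq_zero] at hval
  exact sub_eq_zero.mp hc0

lemma psi4_surj (m : ℕ) [NeZero m] (w : AddCircle (1 : ℚ)) (hw : m • w = 0) :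
    ∃ k : ZMod m, psi4 m k = w := by
  obtain ⟨q, rfl⟩ := QuotientAddGroup.mk_surjective w
  have hw' : ((m • q : ℚ) : AddCircle (1 : ℚ)) = 0 := by
    rw [AddCircle.coe_nsmul]; exact hw
  rw [AddCircle.coe_eq_zero_iff, nsmul_eq_mul] at hw'
  obtain ⟨z, hz⟩ := hw'
  refine ⟨(z : ZMod m), ?_⟩
  rw [psi4_coe]
  congr 1
  have hm : (m : ℚ) ≠ 0 := by exact_mod_cast NeZero.ne m
  field_simp
  rw [zsmul_eq_mul, mul_one] at hz
  rw [hz, mul_comm]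

theorem stmt_4 (m n : ℕ) [NeZero m] (hn : 1 ≤ n)
    (H : AddSubgroup (Fin n → ZMod m)) (x : Fin n → ZMod m) :
    (∀ y : Fin n → ZMod m, (∀ h ∈ H, ∑ i, h i * y i = 0) → ∑ i, x i * y i = 0)
      ↔ x ∈ H := by
  constructor
  · intro hx
    by_contra hxH
    have hx0 : ((QuotientAddGroup.mk' H) x : (Fin n → ZMod m) ⧸ H) ≠ 0 := by
      simpa [QuotientAddGroup.eq_zero_iff] using hxH
    obtain ⟨c, hc⟩ := CharacterModule.exists_character_apply_ne_zero_of_ne_zero hx0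
    have htor : ∀ v : Fin n → ZMod m, m • c ((QuotientAddGroup.mk' H) v) = 0 := by
      intro v
      have h1 : m • ((QuotientAddGroup.mk' H) v) = (QuotientAddGroup.mk' H) (m • v) :=
        (map_nsmul _ _ _).symm
      have h2 : (m • v : Fin n → ZMod m) = 0 := by
        funext i; simp [ZMod.natCast_self, nsmul_eq_mul]
      rw [← map_nsmul, h1, h2, map_zero, map_zero]
    choose k hk using fun i =>
      psi4_surj m (c ((QuotientAddGroup.mk' H) (Pi.single i (1 : ZMod m)))) (htor _)
    have key : ∀ v : Fin n → ZMod m,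
        psi4 m (∑ i, v i * k i) = c ((QuotientAddGroup.mk' H) v) := by
      intro v
      have hv : v = ∑ i, (Pi.single i (v i) : Fin n → ZMod m) := by
        ext j; simp [Finset.sum_apply, Pi.single_apply]
      conv_rhs => rw [hv]
      rw [map_sum, map_sum, map_sum]
      refine Finset.sum_congr rfl fun i _ => ?_
      have h1 : (Pi.single i (v i) : Fin n → ZMod m)
          = (v i).val • (Pi.single i (1 : ZMod m) : Fin n → ZMod m) := by
        ext j
        simp only [Pi.smul_apply, Pi.single_apply]
        split <;> simp [nsmul_eq_mul, ZMod.natCast_val, ZMod.cast_id]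
      rw [h1, map_nsmul, map_nsmul, ← hk i, ← map_nsmul]
      congr 1
      rw [nsmul_eq_mul, ZMod.natCast_val, ZMod.cast_id]
    have hkperp : ∀ h ∈ H, ∑ i, h i * k i = 0 := by
      intro h hh
      apply psi4_inj m
      rw [key h, map_zero]
      have : ((QuotientAddGroup.mk' H) h : (Fin n → ZMod m) ⧸ H) = 0 :=
        (QuotientAddGroup.eq_zero_iff h).mpr hh
      rw [this, map_zero]
    have hfin := hx k hkperp
    apply hc
    rw [← key x, hfin, map_zero]
  · intro hxH y hy
    exact hy x hxH
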